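/- arXiv:2310.03774 — 6 statements merged into one kernel-verified Lean document; each statement's English description precedes it below -/
import Mathlib

section
/- Let f : ℝ → ℝⁿ be bounded and measurable with f(s) = 0 for all s < 0, let x_0 ∈ ℝⁿ, and define x(t) = exp(tΛ)·x_0 + ∫₀ᵗ exp((t−s)Λ)·f(s−τ) ds for t ≥ 0. Then for every t ≥ 0, x(t+τ) = exp(τΛ)·( x(t) + ∫_{t−τ}^{t} exp((t−s−τ)Λ)·f(s) ds ). -/
open Matrix MeasureTheory
open scoped Matrix

noncomputable section

/-- The matrix exponential of a real `n × n` matrix. -/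
def mexp {n : ℕ} (A : Matrix (Fin n) (Fin n) ℝ) : Matrix (Fin n) (Fin n) ℝ :=
  NormedSpace.exp A

lemma mexp_continuous {n : ℕ} {g : ℝ → Matrix (Fin n) (Fin n) ℝ} (hg : Continuous g) :
    Continuous fun u => mexp (g u) := by
  letI : SeminormedRing (Matrix (Fin n) (Fin n) ℝ) := Matrix.linftyOpSemiNormedRing
  letI : NormedRing (Matrix (Fin n) (Fin n) ℝ) := Matrix.linftyOpNormedRing
  letI : NormedAlgebra ℝ (Matrix (Fin n) (Fin n) ℝ) := Matrix.linftyOpNormedAlgebra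
  letI : NormedAlgebra ℚ (Matrix (Fin n) (Fin n) ℝ) := Matrix.linftyOpNormedAlgebra
  exact NormedSpace.exp_continuous.comp hg

lemma mexp_mul {n : ℕ} (Λ : Matrix (Fin n) (Fin n) ℝ) (a b : ℝ) :
    mexp (a • Λ) * mexp (b • Λ) = mexp ((a + b) • Λ) := by
  rw [add_smul, mexp, mexp, mexp, Matrix.exp_add_of_commute]
  exact ((Commute.refl Λ).smul_left a).smul_right b

/-- `mulVec` as a bundled linear map into continuous linear maps. -/
def mvCLM {n : ℕ} : Matrix (Fin n) (Fin n) ℝ →ₗ[ℝ]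
    ((Fin n → ℝ) →L[ℝ] (Fin n → ℝ)) :=
  (LinearMap.toContinuousLinearMap.toLinearMap).comp Matrix.toLin'.toLinearMap

lemma mvCLM_apply {n : ℕ} (M : Matrix (Fin n) (Fin n) ℝ) (v : Fin n → ℝ) :
    mvCLM M v = M.mulVec v := by
  simp [mvCLM, Matrix.toLin'_apply]

lemma aux_integrable {n : ℕ} (Λ : Matrix (Fin n) (Fin n) ℝ) (t a b C : ℝ)
    (f : ℝ → Fin n → ℝ) (hf : Measurable f) (hC : ∀ s, ‖f s‖ ≤ C) :
    IntervalIntegrable (fun u => (mexp ((t - u) • Λ)).mulVec (f u)) volume a b := by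
  have hMc : Continuous fun u : ℝ => mexp ((t - u) • Λ) :=
    mexp_continuous (by continuity)
  have hcont : Continuous fun u : ℝ => mvCLM (mexp ((t - u) • Λ)) :=
    mvCLM.continuous_of_finiteDimensional.comp hMc
  have hmeas : Measurable fun u => (mexp ((t - u) • Λ)).mulVec (f u) := by
    apply measurable_pi_lambda
    intro i
    simp only [Matrix.mulVec, dotProduct]
    apply Finset.measurable_sum
    intro j _
    exact (hMc.matrix_elem i j).measurable.mul ((measurable_pi_apply j).comp hf)
  obtain ⟨K, hK⟩ := (isCompact_uIcc (a := a) (b := b)).exists_bound_of_continuousOn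
    (hcont.norm.continuousOn)
  simp only [norm_norm] at hK
  rw [intervalIntegrable_iff]
  apply Measure.integrableOn_of_bounded (M := K * C) measure_Ioc_lt_top.ne
    hmeas.aestronglyMeasurable
  filter_upwards [ae_restrict_mem measurableSet_Ioc] with u hu
  have hu' : u ∈ Set.uIcc a b := Set.Ioc_subset_Icc_self hu
  calc ‖(mexp ((t - u) • Λ)).mulVec (f u)‖ = ‖mvCLM (mexp ((t - u) • Λ)) (f u)‖ := by
        rw [mvCLM_apply]
    _ ≤ ‖mvCLM (mexp ((t - u) • Λ))‖ * ‖f u‖ := (mvCLM _).le_opNorm _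
    _ ≤ K * C := mul_le_mul (hK u hu') (hC u) (norm_nonneg _)
        ((norm_nonneg _).trans (hK u hu'))

/-- If `f : ℝ → ℝⁿ` is bounded and measurable with `f s = 0` for `s < 0`, and
`x t = exp(tΛ)·x₀ + ∫₀ᵗ exp((t−s)Λ)·f(s−τ) ds` for `t ≥ 0`, then for every `t ≥ 0`,
`x(t+τ) = exp(τΛ)·( x t + ∫_{t−τ}^{t} exp((t−s−τ)Λ)·f s ds )`. -/
theorem statement_1 {n : ℕ} (Λ : Matrix (Fin n) (Fin n) ℝ) (τ : ℝ) (hτ : 0 ≤ τ)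
    (f : ℝ → Fin n → ℝ) (hf : Measurable f) (hfb : ∃ C, ∀ s, ‖f s‖ ≤ C)
    (hf0 : ∀ s < 0, f s = 0) (x0 : Fin n → ℝ) (x : ℝ → Fin n → ℝ)
    (hx : ∀ t, 0 ≤ t → x t = (mexp (t • Λ)).mulVec x0 +
      ∫ s in (0:ℝ)..t, (mexp ((t - s) • Λ)).mulVec (f (s - τ))) :
    ∀ t, 0 ≤ t →
      x (t + τ) = (mexp (τ • Λ)).mulVec
        (x t + ∫ s in (t - τ)..t, (mexp ((t - s - τ) • Λ)).mulVec (f s)) := by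
  obtain ⟨C, hC⟩ := hfb
  intro t ht
  have ht' : 0 ≤ t + τ := by linarith
  set F : ℝ → Fin n → ℝ := fun u => (mexp ((t - u) • Λ)).mulVec (f u) with hF
  have key : ∀ (a : ℝ) (v : Fin n → ℝ),
      (mexp (τ • Λ)).mulVec ((mexp (a • Λ)).mulVec v) = (mexp ((a + τ) • Λ)).mulVec v := by
    intro a v
    rw [Matrix.mulVec_mulVec, mexp_mul, add_comm]
  have pull : ∀ (a b : ℝ) (g : ℝ → Fin n → ℝ), IntervalIntegrable g volume a b →
      (mexp (τ • Λ)).mulVec (∫ s in a..b, g s) = ∫ s in a..b, (mexp (τ • Λ)).mulVec (g s) := by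
    intro a b g hg
    have h := (mvCLM (mexp (τ • Λ))).intervalIntegral_comp_comm hg
    simp_rw [mvCLM_apply] at h
    exact h.symm
  -- LHS
  have hLHS : x (t + τ) = (mexp ((t + τ) • Λ)).mulVec x0 + ∫ u in (-τ)..t, F u := by
    rw [hx (t + τ) ht']
    congr 1
    have h1 : ∀ s : ℝ, (mexp ((t + τ - s) • Λ)).mulVec (f (s - τ)) = F (s - τ) := by
      intro s; simp only [hF]; congr 2; ring
    simp_rw [h1]
    rw [intervalIntegral.integral_comp_sub_right F τ]
    norm_num
  have hF1 : IntervalIntegrable F volume (-τ) (t - τ) :=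
    aux_integrable Λ t (-τ) (t - τ) C f hf hC
  have hF2 : IntervalIntegrable F volume (t - τ) t :=
    aux_integrable Λ t (t - τ) t C f hf hC
  have hint1 : IntervalIntegrable (fun s => (mexp ((t - s) • Λ)).mulVec (f (s - τ)))
      volume 0 t := by
    have h := (aux_integrable Λ (t - τ) (-τ) (t - τ) C f hf hC).comp_sub_right τ
    simp only [show ∀ s : ℝ, t - τ - (s - τ) = t - s from fun s => by ring] at h
    simpa using h
  have hintI : IntervalIntegrable (fun s => (mexp ((t - s - τ) • Λ)).mulVec (f s))
      volume (t - τ) t := by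
    have h := aux_integrable Λ (t - τ) (t - τ) t C f hf hC
    simp only [show ∀ s : ℝ, t - τ - s = t - s - τ from fun s => by ring] at h
    exact h
  have hB : (mexp (τ • Λ)).mulVec (∫ s in (0:ℝ)..t, (mexp ((t - s) • Λ)).mulVec (f (s - τ)))
      = ∫ u in (-τ)..(t - τ), F u := by
    rw [pull 0 t _ hint1]
    simp_rw [key]
    have h1 : ∀ s : ℝ, (mexp ((t - s + τ) • Λ)).mulVec (f (s - τ)) = F (s - τ) := by
      intro s; simp only [hF]; congr 2; ring
    simp_rw [h1]
    rw [intervalIntegral.integral_comp_sub_right F τ]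
    norm_num
  have hI : (mexp (τ • Λ)).mulVec (∫ s in (t - τ)..t, (mexp ((t - s - τ) • Λ)).mulVec (f s))
      = ∫ s in (t - τ)..t, F s := by
    rw [pull _ _ _ hintI]
    simp_rw [key]
    simp only [show ∀ s : ℝ, t - s - τ + τ = t - s from fun s => by ring]
    rfl
  rw [hLHS, hx t ht, Matrix.mulVec_add, Matrix.mulVec_add, key, hB, hI, add_assoc,
    intervalIntegral.integral_add_adjacent_intervals hF1 hF2]
end
end

section
/- Let f : ℝ → ℝⁿ be continuous with f(s) = 0 for all s < 0, let x_0 ∈ ℝⁿ, define x(t) = exp(tΛ)·x_0 + ∫₀ᵗ exp((t−s)Λ)·f(s−τ) ds for t ≥ 0, and define the transformed function y(t) = x(t) + ∫_{t−τ}^{t} exp((t−s−τ)Λ)·f(s) ds. Then y(0) = exp(−τΛ)·x(τ), and y is differentiable on [0,∞) with y′(t) = Λ·y(t) + exp(−τΛ)·f(t) for every t ≥ 0. -/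
open Matrix MeasureTheory
open scoped Matrix

noncomputable section

variable {n : ℕ}

lemma mexp_smul_add (Λ : Matrix (Fin n) (Fin n) ℝ) (a b : ℝ) :
    mexp ((a + b) • Λ) = mexp (a • Λ) * mexp (b • Λ) := by
  rw [show (a + b) • Λ = a • Λ + b • Λ from add_smul a b Λ]
  exact Matrix.exp_add_of_commute _ _ (((Commute.refl Λ).smul_left a).smul_right b)

lemma mexp_zero_smul (Λ : Matrix (Fin n) (Fin n) ℝ) : mexp ((0:ℝ) • Λ) = 1 := by
  rw [zero_smul]; exact NormedSpace.exp_zero (𝔸 := Matrix (Fin n) (Fin n) ℝ)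

lemma mexp_neg_mul (Λ : Matrix (Fin n) (Fin n) ℝ) (a : ℝ) :
    mexp ((-a) • Λ) * mexp (a • Λ) = 1 := by
  rw [← mexp_smul_add, neg_add_cancel, mexp_zero_smul]

lemma hasDerivAt_mexp_entry (Λ : Matrix (Fin n) (Fin n) ℝ) (t : ℝ) (i j : Fin n) :
    HasDerivAt (fun u : ℝ => mexp (u • Λ) i j) ((Λ * mexp (t • Λ)) i j) t := by
  letI : SeminormedRing (Matrix (Fin n) (Fin n) ℝ) := Matrix.linftyOpSemiNormedRing
  letI : NormedRing (Matrix (Fin n) (Fin n) ℝ) := Matrix.linftyOpNormedRing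
  letI : NormedAlgebra ℝ (Matrix (Fin n) (Fin n) ℝ) := Matrix.linftyOpNormedAlgebra
  have h := hasDerivAt_exp_smul_const' (𝕂 := ℝ) Λ t
  let L0 : Matrix (Fin n) (Fin n) ℝ →ₗ[ℝ] ℝ :=
    { toFun := fun M => M i j, map_add' := fun _ _ => rfl, map_smul' := fun _ _ => rfl }
  let L : Matrix (Fin n) (Fin n) ℝ →L[ℝ] ℝ := ⟨L0, L0.continuous_of_finiteDimensional⟩
  exact (L.hasFDerivAt.comp_hasDerivAt t h :)

lemma continuous_mexp_smul (Λ : Matrix (Fin n) (Fin n) ℝ) :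
    Continuous fun u : ℝ => mexp (u • Λ) := by
  apply continuous_matrix
  intro i j
  rw [continuous_iff_continuousAt]
  exact fun t => (hasDerivAt_mexp_entry Λ t i j).continuousAt

lemma hasDerivAt_mexp_mulVec (Λ : Matrix (Fin n) (Fin n) ℝ) {c : ℝ → Fin n → ℝ}
    {c' : Fin n → ℝ} {t : ℝ} (hc : HasDerivAt c c' t) :
    HasDerivAt (fun u : ℝ => (mexp (u • Λ)).mulVec (c u))
      ((Λ * mexp (t • Λ)).mulVec (c t) + (mexp (t • Λ)).mulVec c') t := by
  rw [hasDerivAt_pi]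
  intro i
  have h : ∀ j, HasDerivAt (fun u : ℝ => mexp (u • Λ) i j * c u j)
      ((Λ * mexp (t • Λ)) i j * c t j + mexp (t • Λ) i j * c' j) t :=
    fun j => (hasDerivAt_mexp_entry Λ t i j).mul (hasDerivAt_pi.1 hc j)
  have := HasDerivAt.fun_sum (u := Finset.univ) (fun j _ => h j)
  simpa [Matrix.mulVec, dotProduct, Finset.sum_add_distrib] using this

lemma mulVec_intervalIntegral (M : Matrix (Fin n) (Fin n) ℝ) {g : ℝ → Fin n → ℝ}
    (hg : Continuous g) (a b : ℝ) :
    ∫ s in a..b, M.mulVec (g s) = M.mulVec (∫ s in a..b, g s) := by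
  have L0 : (Fin n → ℝ) →ₗ[ℝ] (Fin n → ℝ) := M.mulVecLin
  let L : (Fin n → ℝ) →L[ℝ] (Fin n → ℝ) :=
    ⟨M.mulVecLin, M.mulVecLin.continuous_of_finiteDimensional⟩
  exact L.intervalIntegral_comp_comm (hg.intervalIntegrable (μ := volume) a b)

lemma mexp_zero' {n : ℕ} : mexp (n := n) 0 = 1 := NormedSpace.exp_zero (𝔸 := Matrix (Fin n) (Fin n) ℝ)

lemma mexp_mul_neg (Λ : Matrix (Fin n) (Fin n) ℝ) (a : ℝ) :
    mexp (a • Λ) * mexp ((-a) • Λ) = 1 := by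
  rw [← mexp_smul_add, add_neg_cancel, mexp_zero_smul]


/-- Let `f : ℝ → ℝⁿ` be continuous with `f s = 0` for `s < 0`, let
`x t = exp(tΛ)·x₀ + ∫₀ᵗ exp((t−s)Λ)·f(s−τ) ds` for `t ≥ 0`, and let
`y t = x t + ∫_{t−τ}^{t} exp((t−s−τ)Λ)·f s ds`. Then `y 0 = exp(−τΛ)·x(τ)` and `y` is
differentiable on `[0,∞)` with `y′(t) = Λ·y(t) + exp(−τΛ)·f(t)` for every `t ≥ 0`. -/
theorem statement_2 {n : ℕ} (Λ : Matrix (Fin n) (Fin n) ℝ) (τ : ℝ) (hτ : 0 ≤ τ)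
    (f : ℝ → Fin n → ℝ) (hf : Continuous f)
    (hf0 : ∀ s < 0, f s = 0) (x0 : Fin n → ℝ) (x y : ℝ → Fin n → ℝ)
    (hx : ∀ t, 0 ≤ t → x t = (mexp (t • Λ)).mulVec x0 +
      ∫ s in (0:ℝ)..t, (mexp ((t - s) • Λ)).mulVec (f (s - τ)))
    (hy : ∀ t, 0 ≤ t → y t = x t +
      ∫ s in (t - τ)..t, (mexp ((t - s - τ) • Λ)).mulVec (f s)) :
    y 0 = (mexp ((-τ) • Λ)).mulVec (x τ) ∧
      ∀ t, 0 ≤ t →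
        HasDerivWithinAt y (Λ.mulVec (y t) + (mexp ((-τ) • Λ)).mulVec (f t))
          (Set.Ici (0:ℝ)) t := by
  set w : ℝ → Fin n → ℝ :=
    fun s => (mexp ((-s) • Λ)).mulVec ((mexp ((-τ) • Λ)).mulVec (f s)) with hw_def
  have hw : Continuous w :=
    (((continuous_mexp_smul Λ).comp continuous_neg).matrix_mulVec
      (continuous_const.matrix_mulVec hf))
  set c : ℝ → Fin n → ℝ := fun u => x0 + ∫ s in (0:ℝ)..u, w s with hc_def
  have hc : ∀ t : ℝ, HasDerivAt c (w t) t := by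
    intro t
    exact (intervalIntegral.integral_hasDerivAt_right
      (hw.intervalIntegrable (μ := volume) 0 t)
      hw.stronglyMeasurable.stronglyMeasurableAtFilter hw.continuousAt).const_add x0
  have key : ∀ t, 0 ≤ t → y t = (mexp (t • Λ)).mulVec (c t) := by
    intro t ht
    set G : ℝ → Fin n → ℝ := fun s => (mexp ((t - s - τ) • Λ)).mulVec (f s) with hG
    have hGc : Continuous G := by
      apply Continuous.matrix_mulVec _ hf
      exact (continuous_mexp_smul Λ).comp (by continuity)
    have hint : ∀ a b : ℝ, IntervalIntegrable G volume a b :=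
      fun a b => hGc.intervalIntegrable a b
    have h1 : (∫ s in (0:ℝ)..t, (mexp ((t - s) • Λ)).mulVec (f (s - τ)))
        = ∫ s in (-τ)..(t - τ), G s := by
      rw [show (-τ : ℝ) = 0 - τ by ring, ← intervalIntegral.integral_comp_sub_right G τ]
      apply intervalIntegral.integral_congr
      intro s _
      simp only [hG]
      rw [show t - (s - τ) - τ = t - s by ring]
    have h2 := intervalIntegral.integral_add_adjacent_intervals
      (hint (-τ) (t - τ)) (hint (t - τ) t)
    have h3 := (intervalIntegral.integral_add_adjacent_intervals
      (hint (-τ) 0) (hint 0 t)).symm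
    have h4 : (∫ s in (-τ)..(0:ℝ), G s) = 0 := by
      have h0 : ∀ᵐ s : ℝ, s ≠ (0:ℝ) := by
        rw [MeasureTheory.ae_iff]
        simp [not_not]
      rw [show (0 : Fin n → ℝ) = ∫ _ in (-τ)..(0:ℝ), (0 : Fin n → ℝ) by simp]
      apply intervalIntegral.integral_congr_ae
      filter_upwards [h0] with s hs hmem
      rw [Set.uIoc_of_le (neg_nonpos.mpr hτ)] at hmem
      have hneg : s < 0 := lt_of_le_of_ne hmem.2 hs
      simp only [hG, hf0 s hneg, Matrix.mulVec_zero]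
    have h5 : (∫ s in (0:ℝ)..t, G s) = (mexp (t • Λ)).mulVec (∫ s in (0:ℝ)..t, w s) := by
      rw [← mulVec_intervalIntegral _ hw]
      apply intervalIntegral.integral_congr
      intro s _
      simp only [hG, hw_def]
      rw [show t - s - τ = t + (-s + -τ) by ring, mexp_smul_add, mexp_smul_add,
        Matrix.mulVec_mulVec, Matrix.mulVec_mulVec, Matrix.mul_assoc]
    rw [hy t ht, hx t ht, h1, add_assoc, h2, h3, h4, zero_add, h5, ← Matrix.mulVec_add]
  have hy0 : y 0 = x0 := by
    rw [key 0 le_rfl]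
    simp [hc_def, mexp_zero', Matrix.one_mulVec]
  have hxτ : x τ = (mexp (τ • Λ)).mulVec x0 := by
    rw [hx τ hτ]
    have hz : (∫ s in (0:ℝ)..τ, (mexp ((τ - s) • Λ)).mulVec (f (s - τ))) = 0 := by
      have h0 : ∀ᵐ s : ℝ, s ≠ τ := by
        rw [MeasureTheory.ae_iff]
        simp [not_not]
      rw [show (0 : Fin n → ℝ) = ∫ _ in (0:ℝ)..τ, (0 : Fin n → ℝ) by simp]
      apply intervalIntegral.integral_congr_ae
      filter_upwards [h0] with s hs hmem
      rw [Set.uIoc_of_le hτ] at hmem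
      have hneg : s - τ < 0 := sub_neg.mpr (lt_of_le_of_ne hmem.2 hs)
      rw [hf0 _ hneg, Matrix.mulVec_zero]
    rw [hz, add_zero]
  refine ⟨?_, ?_⟩
  · rw [hy0, hxτ, Matrix.mulVec_mulVec, mexp_neg_mul, Matrix.one_mulVec]
  · intro t ht
    have hF := hasDerivAt_mexp_mulVec Λ (hc t)
    have hEq : (Λ * mexp (t • Λ)).mulVec (c t) + (mexp (t • Λ)).mulVec (w t)
        = Λ.mulVec (y t) + (mexp ((-τ) • Λ)).mulVec (f t) := by
      congr 1
      · rw [key t ht, Matrix.mulVec_mulVec]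
      · simp only [hw_def]
        rw [Matrix.mulVec_mulVec, Matrix.mulVec_mulVec, mexp_mul_neg, Matrix.one_mul]
    rw [hEq] at hF
    exact hF.hasDerivWithinAt.congr (fun u hu => key u hu) (key t ht)
end
end

section
/- Let u = (u_1,…,u_n) be an admissible control profile of the delayed game with trajectory x_u from x_0 ∈ ℝⁿ, and define y(t) = x_u(t) + ∫_{t−τ}^{t} exp((t−s−τ)Λ)·(∑_{j=1}^n B_j·u_j(s)) ds. Then: (a) y(t) = exp(tΛ)·x_0 + ∫₀ᵗ exp((t−s)Λ)·(∑_{j=1}^n B̂_j·u_j(s)) ds for all t ∈ [0,T], i.e. y coincides on [0,T] with the delay-free trajectory of u from y_0 = x_0; (b) x_u(t_f) = exp(τΛ)·y(T); and (c) for every player i, J_i(u) = (1/d_i)·y(T)ᵀ·L̂_i·y(T) + ∫₀ᵀ r_i·u_i(t)² dt. -/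
open Matrix MeasureTheory
open scoped Matrix

noncomputable section

/-- An admissible control of the delayed game: a bounded measurable function `u : ℝ → ℝ`
with `u s = 0` for `s < 0`. -/
def AdmissibleD (u : ℝ → ℝ) : Prop :=
  Measurable u ∧ (∃ C, ∀ s, |u s| ≤ C) ∧ ∀ s < 0, u s = 0

/-- An admissible control of the delay-free game: a bounded measurable function. -/
def AdmissibleF (u : ℝ → ℝ) : Prop :=
  Measurable u ∧ ∃ C, ∀ s, |u s| ≤ C

/-- Data of the differential games of opinion formation: the system matrix `Λ`
(the continuous-time Hegselmann–Krause matrix `Λ = D⁻¹A − I`), the input delay `τ`,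
the terminal time `tf`, and for each player `i` the input vector `B i`, the control
weight `r i`, the neighborhood size `d i = |𝒩ᵢ|`, the agent-`i` graph Laplacian `L i`
and the stubbornness coefficient `ω i`. -/
structure GameData (n : ℕ) where
  Λ : Matrix (Fin n) (Fin n) ℝ
  τ : ℝ
  tf : ℝ
  B : Fin n → Fin n → ℝ
  r : Fin n → ℝ
  d : Fin n → ℝ
  L : Fin n → Matrix (Fin n) (Fin n) ℝ
  ω : Fin n → ℝ

namespace GameData

variable {n : ℕ} (G : GameData n)

/-- The standing hypotheses: `τ ≥ 0`, `t_f > τ`, `rᵢ > 0`, `dᵢ > 0`, each `Lᵢ` symmetric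
positive semidefinite, and `ωᵢ ∈ [0,1]`. -/
def Valid : Prop :=
  0 ≤ G.τ ∧ G.τ < G.tf ∧ (∀ i, 0 < G.r i) ∧ (∀ i, 0 < G.d i) ∧
    (∀ i, (G.L i).PosSemidef) ∧ ∀ i, G.ω i ∈ Set.Icc (0 : ℝ) 1

/-- `T = t_f − τ`. -/
def T : ℝ := G.tf - G.τ

/-- `B̂ᵢ = exp(−τΛ)·Bᵢ`. -/
def Bhat (i : Fin n) : Fin n → ℝ := (mexp ((-G.τ) • G.Λ)).mulVec (G.B i)

/-- `L̂ᵢ = exp(τΛᵀ)·Lᵢ·exp(τΛ)`. -/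
def Lhat (i : Fin n) : Matrix (Fin n) (Fin n) ℝ :=
  mexp (G.τ • G.Λᵀ) * G.L i * mexp (G.τ • G.Λ)

/-- `Sᵢ = (1/rᵢ)·B̂ᵢ·B̂ᵢᵀ`. -/
def S (i : Fin n) : Matrix (Fin n) (Fin n) ℝ :=
  (1 / G.r i) • vecMulVec (G.Bhat i) (G.Bhat i)

/-- The matrix `∫₀ᵗ exp((t−s)Λ)·Sᵢ·exp((T−s)Λᵀ) ds` (entrywise integral). -/
def Phi (T' : ℝ) (i : Fin n) (t : ℝ) : Matrix (Fin n) (Fin n) ℝ :=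
  Matrix.of fun a b =>
    ∫ s in (0:ℝ)..t, (mexp ((t - s) • G.Λ) * G.S i * mexp ((T' - s) • G.Λᵀ)) a b

/-- `Ψᵢ = ∫₀ᵀ exp((T−s)Λ)·Sᵢ·exp((T−s)Λᵀ) ds` with `T = t_f − τ`. -/
def Psi (i : Fin n) : Matrix (Fin n) (Fin n) ℝ := G.Phi G.T i G.T

/-- `H = I + ∑ⱼ (1/dⱼ)·Ψⱼ·L̂ⱼ`. -/
def H : Matrix (Fin n) (Fin n) ℝ :=
  1 + ∑ j : Fin n, (1 / G.d j) • (G.Psi j * G.Lhat j)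

/-- `Wᵢ`: the matrix whose `(i,i)` entry is `ωᵢ` and all other entries are `0`. -/
def W (i : Fin n) : Matrix (Fin n) (Fin n) ℝ := Matrix.single i i (G.ω i)

/-- `Ŵᵢ = exp(τΛᵀ)·Wᵢ·exp(τΛ)`. -/
def What (i : Fin n) : Matrix (Fin n) (Fin n) ℝ :=
  mexp (G.τ • G.Λᵀ) * G.W i * mexp (G.τ • G.Λ)

/-- `Ĥ = I + ∑ⱼ Ψⱼ·(Ŵⱼ + ((1−ωⱼ)/dⱼ)·L̂ⱼ)`. -/
def Hhat : Matrix (Fin n) (Fin n) ℝ :=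
  1 + ∑ j : Fin n, G.Psi j * (G.What j + ((1 - G.ω j) / G.d j) • G.Lhat j)

/-- The trajectory of the delayed game:
`x_u(t) = exp(tΛ)·x₀ + ∫₀ᵗ exp((t−s)Λ)·(∑ⱼ Bⱼ·uⱼ(s−τ)) ds`. -/
def xtraj (x0 : Fin n → ℝ) (u : Fin n → ℝ → ℝ) (t : ℝ) : Fin n → ℝ :=
  (mexp (t • G.Λ)).mulVec x0 +
    ∫ s in (0:ℝ)..t, (mexp ((t - s) • G.Λ)).mulVec (∑ j : Fin n, u j (s - G.τ) • G.B j)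

/-- The trajectory of the delay-free game:
`y_u(t) = exp(tΛ)·y₀ + ∫₀ᵗ exp((t−s)Λ)·(∑ⱼ B̂ⱼ·uⱼ(s)) ds`. -/
def ytraj (y0 : Fin n → ℝ) (u : Fin n → ℝ → ℝ) (t : ℝ) : Fin n → ℝ :=
  (mexp (t • G.Λ)).mulVec y0 +
    ∫ s in (0:ℝ)..t, (mexp ((t - s) • G.Λ)).mulVec (∑ j : Fin n, u j s • G.Bhat j)

/-- Player `i`'s cost in the delayed game:
`Jᵢ(u) = (1/dᵢ)·x_u(t_f)ᵀ·Lᵢ·x_u(t_f) + ∫₀^{t_f} rᵢ·uᵢ(t−τ)² dt`. -/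
def J (x0 : Fin n → ℝ) (i : Fin n) (u : Fin n → ℝ → ℝ) : ℝ :=
  (1 / G.d i) * (G.xtraj x0 u G.tf ⬝ᵥ (G.L i).mulVec (G.xtraj x0 u G.tf)) +
    ∫ t in (0:ℝ)..G.tf, G.r i * u i (t - G.τ) ^ 2

/-- Player `i`'s cost in the delay-free game:
`Ĵᵢ(u) = (1/dᵢ)·y_u(T)ᵀ·L̂ᵢ·y_u(T) + ∫₀ᵀ rᵢ·uᵢ(t)² dt`. -/
def JF (y0 : Fin n → ℝ) (i : Fin n) (u : Fin n → ℝ → ℝ) : ℝ :=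
  (1 / G.d i) * (G.ytraj y0 u G.T ⬝ᵥ (G.Lhat i).mulVec (G.ytraj y0 u G.T)) +
    ∫ t in (0:ℝ)..G.T, G.r i * u i t ^ 2

/-- Player `i`'s stubborn cost in the delayed game. -/
def Jstub (x0 : Fin n → ℝ) (i : Fin n) (u : Fin n → ℝ → ℝ) : ℝ :=
  (G.xtraj x0 u G.tf - x0) ⬝ᵥ (G.W i).mulVec (G.xtraj x0 u G.tf - x0) +
    ((1 - G.ω i) / G.d i) * (G.xtraj x0 u G.tf ⬝ᵥ (G.L i).mulVec (G.xtraj x0 u G.tf)) +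
    ∫ t in (0:ℝ)..G.tf, G.r i * u i (t - G.τ) ^ 2

/-- Player `i`'s stubborn cost in the delay-free game, with reference opinion `x₀`. -/
def JstubF (x0 y0 : Fin n → ℝ) (i : Fin n) (u : Fin n → ℝ → ℝ) : ℝ :=
  ((mexp (G.τ • G.Λ)).mulVec (G.ytraj y0 u G.T) - x0) ⬝ᵥ
      (G.W i).mulVec ((mexp (G.τ • G.Λ)).mulVec (G.ytraj y0 u G.T) - x0) +
    ((1 - G.ω i) / G.d i) * (G.ytraj y0 u G.T ⬝ᵥ (G.Lhat i).mulVec (G.ytraj y0 u G.T)) +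
    ∫ t in (0:ℝ)..G.T, G.r i * u i t ^ 2

/-- Open-loop Nash equilibrium of the delayed game. -/
def NashD (x0 : Fin n → ℝ) (u : Fin n → ℝ → ℝ) : Prop :=
  (∀ i, AdmissibleD (u i)) ∧
    ∀ i, ∀ v : ℝ → ℝ, AdmissibleD v →
      G.J x0 i u ≤ G.J x0 i (Function.update u i v)

/-- Open-loop Nash equilibrium of the delay-free game. -/
def NashF (y0 : Fin n → ℝ) (u : Fin n → ℝ → ℝ) : Prop :=
  (∀ i, AdmissibleF (u i)) ∧
    ∀ i, ∀ v : ℝ → ℝ, AdmissibleF v →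
      G.JF y0 i u ≤ G.JF y0 i (Function.update u i v)

/-- Open-loop Nash equilibrium of the stubborn delayed game. -/
def NashStubD (x0 : Fin n → ℝ) (u : Fin n → ℝ → ℝ) : Prop :=
  (∀ i, AdmissibleD (u i)) ∧
    ∀ i, ∀ v : ℝ → ℝ, AdmissibleD v →
      G.Jstub x0 i u ≤ G.Jstub x0 i (Function.update u i v)

/-- Open-loop Nash equilibrium of the stubborn delay-free game. -/
def NashStubF (x0 y0 : Fin n → ℝ) (u : Fin n → ℝ → ℝ) : Prop :=
  (∀ i, AdmissibleF (u i)) ∧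
    ∀ i, ∀ v : ℝ → ℝ, AdmissibleF v →
      G.JstubF x0 y0 i u ≤ G.JstubF x0 y0 i (Function.update u i v)

end GameData

namespace Helpers

variable {n : ℕ}

lemma mexp_smul_add (Λ : Matrix (Fin n) (Fin n) ℝ) (a b : ℝ) :
    mexp ((a + b) • Λ) = mexp (a • Λ) * mexp (b • Λ) := by
  rw [mexp, mexp, mexp, add_smul]
  exact Matrix.exp_add_of_commute _ _ (((Commute.refl Λ).smul_left a).smul_right b)

lemma mexp_mulVec_mulVec (Λ : Matrix (Fin n) (Fin n) ℝ) (a b : ℝ) (w : Fin n → ℝ) :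
    (mexp (a • Λ)).mulVec ((mexp (b • Λ)).mulVec w) = (mexp ((a + b) • Λ)).mulVec w := by
  rw [mexp_smul_add, Matrix.mulVec_mulVec]

lemma mexp_transpose (Λ : Matrix (Fin n) (Fin n) ℝ) (c : ℝ) :
    mexp (c • Λᵀ) = (mexp (c • Λ))ᵀ := by
  rw [mexp, mexp, ← Matrix.transpose_smul, Matrix.exp_transpose]

lemma mexp_smul_continuous (Λ : Matrix (Fin n) (Fin n) ℝ) :
    Continuous fun c : ℝ => mexp (c • Λ) := by
  letI : NormedRing (Matrix (Fin n) (Fin n) ℝ) := Matrix.linftyOpNormedRing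
  letI : NormedAlgebra ℝ (Matrix (Fin n) (Fin n) ℝ) := Matrix.linftyOpNormedAlgebra
  letI : NormedAlgebra ℚ (Matrix (Fin n) (Fin n) ℝ) :=
    NormedAlgebra.restrictScalars ℚ ℝ (Matrix (Fin n) (Fin n) ℝ)
  exact (NormedSpace.exp_continuous (𝔸 := Matrix (Fin n) (Fin n) ℝ)).comp (continuous_id.smul continuous_const)

lemma intervalIntegrable_mulVec (M : ℝ → Matrix (Fin n) (Fin n) ℝ) (hM : Continuous M)
    {v : ℝ → Fin n → ℝ} (hv : Measurable v) {C : ℝ} (hC : ∀ s, ‖v s‖ ≤ C) (a b : ℝ) :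
    IntervalIntegrable (fun s => (M s).mulVec (v s)) volume a b := by
  have hC0 : 0 ≤ C := le_trans (norm_nonneg _) (hC 0)
  have hMeas : Measurable fun s => (M s).mulVec (v s) := by
    apply measurable_pi_lambda
    intro i
    simp only [Matrix.mulVec, dotProduct]
    exact Finset.measurable_sum _ fun j _ =>
      (((continuous_apply j).comp ((continuous_apply i).comp hM)).measurable.mul
        ((measurable_pi_apply j).comp hv))
  have hg : Continuous fun s => ∑ i : Fin n, ∑ j : Fin n, |M s i j| :=
    continuous_finset_sum _ fun i _ => continuous_finset_sum _ fun j _ =>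
      ((continuous_apply j).comp ((continuous_apply i).comp hM)).abs
  obtain ⟨K, hK⟩ := (isCompact_uIcc (a := a) (b := b)).exists_bound_of_continuousOn hg.continuousOn
  have hKnn : 0 ≤ K := le_trans (norm_nonneg _) (hK a Set.left_mem_uIcc)
  have hK' : ∀ s ∈ Set.uIcc a b, ∀ i j, |M s i j| ≤ K := by
    intro s hs i j
    have h1 : |M s i j| ≤ ∑ i : Fin n, ∑ j : Fin n, |M s i j| := by
      calc |M s i j| ≤ ∑ j : Fin n, |M s i j| :=
            Finset.single_le_sum (f := fun j => |M s i j|)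
              (fun k _ => abs_nonneg _) (Finset.mem_univ j)
        _ ≤ ∑ i : Fin n, ∑ j : Fin n, |M s i j| :=
            Finset.single_le_sum (f := fun i => ∑ j : Fin n, |M s i j|)
              (fun k _ => Finset.sum_nonneg fun _ _ => abs_nonneg _) (Finset.mem_univ i)
    exact h1.trans ((le_abs_self _).trans (hK s hs))
  have hbound : ∀ s ∈ Set.uIcc a b, ‖(M s).mulVec (v s)‖ ≤ (n : ℝ) * (K * C) := by
    intro s hs
    refine pi_norm_le_iff_of_nonneg (by positivity) |>.2 fun i => ?_
    rw [Real.norm_eq_abs]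
    calc |((M s).mulVec (v s)) i| = |∑ j : Fin n, M s i j * v s j| := rfl
      _ ≤ ∑ j : Fin n, |M s i j * v s j| := Finset.abs_sum_le_sum_abs _ _
      _ ≤ ∑ _j : Fin n, K * C := by
          refine Finset.sum_le_sum fun j _ => ?_
          rw [abs_mul]
          have h2 : |v s j| ≤ C := (Real.norm_eq_abs _ ▸ norm_le_pi_norm (v s) j).trans (hC s)
          exact mul_le_mul (hK' s hs i j) h2 (abs_nonneg _)
            ((abs_nonneg (M s i j)).trans (hK' s hs i j))
      _ = (n : ℝ) * (K * C) := by simp [mul_comm]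
  rw [intervalIntegrable_iff]
  refine Integrable.mono' (g := fun _ => (n : ℝ) * (K * C)) ?_ hMeas.aestronglyMeasurable ?_
  · exact integrableOn_const (by rw [Set.uIoc]; exact measure_Ioc_lt_top.ne)
  · filter_upwards [ae_restrict_mem measurableSet_uIoc] with s hs
    exact hbound s (Set.uIoc_subset_uIcc hs)

lemma intervalIntegrable_bdd (g : ℝ → ℝ) (hm : Measurable g) {C : ℝ}
    (hC : ∀ s, |g s| ≤ C) (a b : ℝ) : IntervalIntegrable g volume a b := by
  rw [intervalIntegrable_iff]
  refine Integrable.mono' (g := fun _ => C) ?_ hm.aestronglyMeasurable ?_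
  · exact integrableOn_const (by rw [Set.uIoc]; exact measure_Ioc_lt_top.ne)
  · exact ae_of_all _ fun s => (Real.norm_eq_abs _).le.trans (hC s)

lemma integral_zero_of_neg {α : Type*} [NormedAddCommGroup α] [NormedSpace ℝ α]
    (g : ℝ → α) (hg : ∀ s < 0, g s = 0) {a : ℝ} (ha : a ≤ 0) :
    ∫ s in a..(0:ℝ), g s = 0 := by
  have h0 : ∀ᵐ s : ℝ, s ≠ 0 := by
    refine (MeasureTheory.ae_iff).2 ?_
    have : {s : ℝ | ¬ s ≠ 0} = {(0:ℝ)} := by ext s; simp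
    rw [this]; exact Real.volume_singleton
  rw [show (0:α) = ∫ s in a..(0:ℝ), (0:α) by simp]
  refine intervalIntegral.integral_congr_ae ?_
  filter_upwards [h0] with s hs hmem
  rw [Set.uIoc_of_le ha] at hmem
  exact hg s (lt_of_le_of_ne hmem.2 hs)

lemma mulVec_intervalIntegral {n : ℕ} (A : Matrix (Fin n) (Fin n) ℝ) (f : ℝ → Fin n → ℝ)
    (a b : ℝ) (hf : IntervalIntegrable f volume a b) :
    A.mulVec (∫ s in a..b, f s) = ∫ s in a..b, A.mulVec (f s) := by
  have := (LinearMap.toContinuousLinearMap A.mulVecLin).intervalIntegral_comp_comm hf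
  simpa [Matrix.mulVecLin] using this.symm

lemma mulVec_sum_smul {n : ℕ} (A : Matrix (Fin n) (Fin n) ℝ) (c : Fin n → ℝ)
    (w : Fin n → Fin n → ℝ) :
    A.mulVec (∑ j : Fin n, c j • w j) = ∑ j : Fin n, c j • A.mulVec (w j) := by
  simp only [← Matrix.mulVecLin_apply, map_sum, LinearMap.map_smul]

end Helpers

/-- For an admissible control profile `u` of the delayed game with trajectory `x_u` from
`x₀`, the delay-free transform `y(t) = x_u(t) + ∫_{t−τ}^{t} exp((t−s−τ)Λ)·(∑ⱼ Bⱼ uⱼ(s)) ds`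
(a) coincides on `[0,T]` with the delay-free trajectory of `u` from `y₀ = x₀`,
(b) satisfies `x_u(t_f) = exp(τΛ)·y(T)`, and
(c) gives `Jᵢ(u) = (1/dᵢ)·y(T)ᵀ·L̂ᵢ·y(T) + ∫₀ᵀ rᵢ·uᵢ(t)² dt` for every player `i`. -/
theorem statement_3 {n : ℕ} (G : GameData n) (hG : G.Valid) (x0 : Fin n → ℝ)
    (u : Fin n → ℝ → ℝ) (hu : ∀ i, AdmissibleD (u i)) (y : ℝ → Fin n → ℝ)
    (hy : ∀ t, y t = G.xtraj x0 u t +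
      ∫ s in (t - G.τ)..t,
        (mexp ((t - s - G.τ) • G.Λ)).mulVec (∑ j : Fin n, u j s • G.B j)) :
    (∀ t ∈ Set.Icc (0:ℝ) G.T, y t = G.ytraj x0 u t) ∧
      G.xtraj x0 u G.tf = (mexp (G.τ • G.Λ)).mulVec (y G.T) ∧
      ∀ i, G.J x0 i u =
        (1 / G.d i) * (y G.T ⬝ᵥ (G.Lhat i).mulVec (y G.T)) +
          ∫ t in (0:ℝ)..G.T, G.r i * u i t ^ 2 := by

  classical
  obtain ⟨hτ, htf, hr, hd, hL, hω⟩ := hG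
  choose Cu hCu using fun j => (hu j).2.1
  have hvmeas : Measurable fun s => ∑ j : Fin n, u j s • G.B j := by
    apply measurable_pi_lambda
    intro i
    simp only [Finset.sum_apply, Pi.smul_apply, smul_eq_mul]
    exact Finset.measurable_sum _ fun j _ => ((hu j).1.mul measurable_const)
  have hvC : ∀ s, ‖∑ j : Fin n, u j s • G.B j‖ ≤ ∑ j : Fin n, Cu j * ‖G.B j‖ := by
    intro s
    refine pi_norm_le_iff_of_nonneg (Finset.sum_nonneg fun j _ =>
      mul_nonneg (le_trans (abs_nonneg _) (hCu j s)) (norm_nonneg _)) |>.2 fun i => ?_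
    rw [Real.norm_eq_abs]
    calc |(∑ j : Fin n, u j s • G.B j) i| = |∑ j : Fin n, u j s * G.B j i| := by
          simp [Finset.sum_apply]
      _ ≤ ∑ j : Fin n, |u j s * G.B j i| := Finset.abs_sum_le_sum_abs _ _
      _ ≤ ∑ j : Fin n, Cu j * ‖G.B j‖ := by
          refine Finset.sum_le_sum fun j _ => ?_
          rw [abs_mul]
          exact mul_le_mul (hCu j s)
            ((Real.norm_eq_abs _ ▸ norm_le_pi_norm (G.B j) i).trans le_rfl)
            (abs_nonneg _) (le_trans (abs_nonneg _) (hCu j s))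
  have hvzero : ∀ s < 0, (∑ j : Fin n, u j s • G.B j) = 0 := by
    intro s hs
    have : ∀ j, u j s = 0 := fun j => (hu j).2.2 s hs
    simp [this]
  have hfint : ∀ t a b, IntervalIntegrable
      (fun s => (mexp ((t - s - G.τ) • G.Λ)).mulVec (∑ j : Fin n, u j s • G.B j)) volume a b :=
    fun t a b => Helpers.intervalIntegrable_mulVec (fun s => mexp ((t - s - G.τ) • G.Λ))
      ((Helpers.mexp_smul_continuous G.Λ).comp
        (by fun_prop : Continuous fun s : ℝ => t - s - G.τ))
      hvmeas hvC a b
  have hfzero : ∀ t, ∀ s < 0,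
      (mexp ((t - s - G.τ) • G.Λ)).mulVec (∑ j : Fin n, u j s • G.B j) = 0 := by
    intro t s hs
    rw [hvzero s hs, Matrix.mulVec_zero]
  have key : ∀ t, (∫ s in (0:ℝ)..t, (mexp ((t - s) • G.Λ)).mulVec
        (∑ j : Fin n, u j (s - G.τ) • G.B j))
      = ∫ s in (0:ℝ)..(t - G.τ),
          (mexp ((t - s - G.τ) • G.Λ)).mulVec (∑ j : Fin n, u j s • G.B j) := by
    intro t
    have h1 : (∫ s in (0:ℝ)..t, (mexp ((t - s) • G.Λ)).mulVec
          (∑ j : Fin n, u j (s - G.τ) • G.B j))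
        = ∫ s in (0 - G.τ)..(t - G.τ),
            (mexp ((t - s - G.τ) • G.Λ)).mulVec (∑ j : Fin n, u j s • G.B j) := by
      rw [← intervalIntegral.integral_comp_sub_right
        (fun s => (mexp ((t - s - G.τ) • G.Λ)).mulVec (∑ j : Fin n, u j s • G.B j)) G.τ]
      refine intervalIntegral.integral_congr fun s _ => ?_
      rw [show t - (s - G.τ) - G.τ = t - s by ring]
    rw [h1, zero_sub, ← intervalIntegral.integral_add_adjacent_intervals
        (hfint t (-G.τ) 0) (hfint t 0 (t - G.τ)),
      Helpers.integral_zero_of_neg _ (hfzero t) (neg_nonpos.2 hτ), zero_add]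
  have hx : ∀ t, G.xtraj x0 u t = (mexp (t • G.Λ)).mulVec x0 +
      ∫ s in (0:ℝ)..(t - G.τ),
        (mexp ((t - s - G.τ) • G.Λ)).mulVec (∑ j : Fin n, u j s • G.B j) := by
    intro t
    rw [GameData.xtraj, key t]
  have hyrep : ∀ t, y t = (mexp (t • G.Λ)).mulVec x0 +
      ∫ s in (0:ℝ)..t,
        (mexp ((t - s - G.τ) • G.Λ)).mulVec (∑ j : Fin n, u j s • G.B j) := by
    intro t
    rw [hy t, hx t, add_assoc, intervalIntegral.integral_add_adjacent_intervals
      (hfint t 0 (t - G.τ)) (hfint t (t - G.τ) t)]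
  have ha : ∀ t, y t = G.ytraj x0 u t := by
    intro t
    rw [hyrep t, GameData.ytraj]
    congr 1
    refine intervalIntegral.integral_congr fun s _ => ?_
    simp only [GameData.Bhat, Helpers.mulVec_sum_smul, Helpers.mexp_mulVec_mulVec]
    simp only [sub_eq_add_neg]
  have hT2 : G.tf - G.τ = G.T := rfl
  have hb : G.xtraj x0 u G.tf = (mexp (G.τ • G.Λ)).mulVec (y G.T) := by
    rw [hyrep G.T, hx G.tf, Matrix.mulVec_add, Helpers.mexp_mulVec_mulVec,
      Helpers.mulVec_intervalIntegral _ _ _ _ (hfint G.T 0 G.T),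
      show G.τ + G.T = G.tf by rw [GameData.T]; ring, hT2]
    congr 1
    refine intervalIntegral.integral_congr fun s _ => ?_
    rw [Helpers.mexp_mulVec_mulVec,
      show G.τ + (G.T - s - G.τ) = G.tf - s - G.τ by rw [GameData.T]; ring]
  refine ⟨fun t _ => ha t, hb, fun i => ?_⟩
  have hquad : ((mexp (G.τ • G.Λ)).mulVec (y G.T)) ⬝ᵥ
        (G.L i).mulVec ((mexp (G.τ • G.Λ)).mulVec (y G.T))
      = y G.T ⬝ᵥ (G.Lhat i).mulVec (y G.T) := by
    rw [GameData.Lhat, Helpers.mexp_transpose, ← Matrix.mulVec_mulVec, ← Matrix.mulVec_mulVec,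
      dotProduct_mulVec (y G.T), Matrix.vecMul_transpose]
  rw [GameData.J, hb, hquad]
  congr 1
  have hint : ∀ a b, IntervalIntegrable (fun t => G.r i * u i t ^ 2) volume a b := by
    intro a b
    refine Helpers.intervalIntegrable_bdd _ (((hu i).1.pow_const 2).const_mul (G.r i))
      (C := |G.r i| * Cu i ^ 2) (fun s => ?_) a b
    rw [abs_mul, abs_pow]
    exact mul_le_mul_of_nonneg_left
      (pow_le_pow_left₀ (abs_nonneg _) (hCu i s) 2) (abs_nonneg _)
  rw [intervalIntegral.integral_comp_sub_right (fun w => G.r i * u i w ^ 2) G.τ, zero_sub, hT2,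
    ← intervalIntegral.integral_add_adjacent_intervals (hint (-G.τ) 0) (hint 0 G.T),
    Helpers.integral_zero_of_neg _ (fun s hs => by rw [(hu i).2.2 s hs]; ring) (neg_nonpos.2 hτ),
    zero_add]
end
end

section
/- Let u = (u_1,…,u_n) be an admissible control profile of the delayed game with trajectory x_u from x_0 ∈ ℝⁿ, and define y(t) = x_u(t) + ∫_{t−τ}^{t} exp((t−s−τ)Λ)·(∑_{j=1}^n B_j·u_j(s)) ds. Then for every player i the stubborn cost satisfies J̃_i(u) = (exp(τΛ)·y(T) − x_0)ᵀ·W_i·(exp(τΛ)·y(T) − x_0) + ((1−ω_i)/d_i)·y(T)ᵀ·L̂_i·y(T) + ∫₀ᵀ r_i·u_i(t)² dt = y(T)ᵀ·Ŵ_i·y(T) − 2·y(T)ᵀ·exp(τΛᵀ)·W_i·x_0 + x_0ᵀ·W_i·x_0 + ((1−ω_i)/d_i)·y(T)ᵀ·L̂_i·y(T) + ∫₀ᵀ r_i·u_i(t)² dt. -/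
open Matrix MeasureTheory
open scoped Matrix

noncomputable section

namespace S4Aux

lemma mexp_add_smul {n : ℕ} (Λ : Matrix (Fin n) (Fin n) ℝ) (a b : ℝ) :
    mexp ((a + b) • Λ) = mexp (a • Λ) * mexp (b • Λ) := by
  rw [add_smul]
  exact Matrix.exp_add_of_commute _ _ (((Commute.refl Λ).smul_left a).smul_right b)

lemma mexp_transpose {n : ℕ} (Λ : Matrix (Fin n) (Fin n) ℝ) (t : ℝ) :
    mexp (t • Λᵀ) = (mexp (t • Λ))ᵀ := by
  rw [← Matrix.transpose_smul]
  exact Matrix.exp_transpose _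

section
attribute [local instance] Matrix.linftyOpNormedAddCommGroup Matrix.linftyOpNormedSpace
  Matrix.linftyOpNormedRing Matrix.linftyOpNormedAlgebra

lemma II_vec {n : ℕ} (Λ : Matrix (Fin n) (Fin n) ℝ) (c : ℝ) (f : ℝ → Fin n → ℝ)
    (hmeas : ∀ i, Measurable fun s => f s i) (C : ℝ) (hC : ∀ s i, |f s i| ≤ C) (a b : ℝ) :
    IntervalIntegrable (fun s => (mexp ((c - s) • Λ)).mulVec (f s)) volume a b := by
  letI : CompleteSpace (Matrix (Fin n) (Fin n) ℝ) := FiniteDimensional.complete ℝ _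
  have hcont : Continuous fun s : ℝ => mexp ((c - s) • Λ) :=
    NormedSpace.exp_continuous.comp ((continuous_const.sub continuous_id).smul continuous_const)
  obtain ⟨K, hK⟩ := (isCompact_uIcc (a := a) (b := b)).exists_bound_of_continuousOn
    hcont.continuousOn
  have hfnorm : ∀ s, ‖f s‖ ≤ max C 0 := by
    intro s
    refine (pi_norm_le_iff_of_nonneg (le_max_right _ _)).2 fun i => ?_
    exact (hC s i).trans (le_max_left _ _)
  rw [intervalIntegrable_iff]
  refine Integrable.mono' (g := fun _ => max K 0 * max C 0)
    (integrableOn_const measure_Ioc_lt_top.ne) ?_ ?_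
  · rw [aestronglyMeasurable_iff_aemeasurable]
    refine Measurable.aemeasurable ?_
    rw [measurable_pi_iff]
    intro i
    simp only [Matrix.mulVec, dotProduct]
    exact Finset.measurable_sum _ fun j _ =>
      (((continuous_apply j).comp ((continuous_apply i).comp hcont)).measurable).mul (hmeas j)
  · refine ae_restrict_of_forall_mem measurableSet_Ioc fun s hs => ?_
    have h1 : ‖mexp ((c - s) • Λ)‖ ≤ max K 0 :=
      le_trans (hK s (Set.Ioc_subset_Icc_self hs)) (le_max_left _ _)
    calc ‖(mexp ((c - s) • Λ)).mulVec (f s)‖ ≤ ‖mexp ((c - s) • Λ)‖ * ‖f s‖ :=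
          Matrix.linfty_opNorm_mulVec _ _
      _ ≤ max K 0 * max C 0 :=
          mul_le_mul h1 (hfnorm s) (norm_nonneg _) (le_max_right _ _)

end

lemma pull_mulVec {n : ℕ} (A : Matrix (Fin n) (Fin n) ℝ) (F : ℝ → Fin n → ℝ) (a b : ℝ)
    (hF : IntervalIntegrable F volume a b) :
    A.mulVec (∫ s in a..b, F s) = ∫ s in a..b, A.mulVec (F s) := by
  have := (A.mulVecLin.toContinuousLinearMap).intervalIntegral_comp_comm hF
  simpa using this.symm

lemma II_scalar (g : ℝ → ℝ) (hg : Measurable g) (C : ℝ) (hC : ∀ s, |g s| ≤ C) (a b : ℝ) :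
    IntervalIntegrable g volume a b := by
  rw [intervalIntegrable_iff]
  refine Integrable.mono' (g := fun _ => C) (integrableOn_const measure_Ioc_lt_top.ne)
    hg.aestronglyMeasurable ?_
  exact Filter.Eventually.of_forall fun s => by simpa using hC s

lemma quad {n : ℕ} (E M : Matrix (Fin n) (Fin n) ℝ) (v w : Fin n → ℝ) :
    (E.mulVec v) ⬝ᵥ M.mulVec (E.mulVec w) = v ⬝ᵥ (Eᵀ * M * E).mulVec w := by
  simp [Matrix.dotProduct_mulVec, ← Matrix.vecMul_vecMul, Matrix.vecMul_transpose]

lemma dot_trans {n : ℕ} (E : Matrix (Fin n) (Fin n) ℝ) (v w : Fin n → ℝ) :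
    v ⬝ᵥ Eᵀ.mulVec w = (E.mulVec v) ⬝ᵥ w := by
  rw [Matrix.dotProduct_mulVec, Matrix.vecMul_transpose]

lemma dot_W {n : ℕ} (i : Fin n) (ω : ℝ) (a b : Fin n → ℝ) :
    a ⬝ᵥ (Matrix.single i i ω).mulVec b = ω * a i * b i := by
  simp [dotProduct, Matrix.mulVec, Matrix.single, ite_and, mul_ite,
    Finset.sum_ite_eq, Finset.mul_sum]
  ring

/-- The key trajectory identity: `exp(τΛ)·y(T) = x_u(t_f)`. -/
lemma traj_key {n : ℕ} (G : GameData n) (x0 : Fin n → ℝ) (u : Fin n → ℝ → ℝ)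
    (hu : ∀ i, AdmissibleD (u i)) (y : ℝ → Fin n → ℝ)
    (hy : ∀ t, y t = G.xtraj x0 u t +
      ∫ s in (t - G.τ)..t,
        (mexp ((t - s - G.τ) • G.Λ)).mulVec (∑ j : Fin n, u j s • G.B j)) :
    (mexp (G.τ • G.Λ)).mulVec (y G.T) = G.xtraj x0 u G.tf := by
  have hfm : ∀ i, Measurable fun s => (∑ j : Fin n, u j s • G.B j) i := by
    intro i
    simp only [Finset.sum_apply, Pi.smul_apply, smul_eq_mul]
    exact Finset.measurable_sum _ fun j _ => ((hu j).1).mul measurable_const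
  choose C hCb using fun j => (hu j).2.1
  have hfb : ∀ s i, |(∑ j : Fin n, u j s • G.B j) i| ≤ ∑ j : Fin n, |C j| * ‖G.B j‖ := by
    intro s i
    have h1 : |(∑ j : Fin n, u j s • G.B j) i| ≤ ∑ j : Fin n, |u j s * G.B j i| := by
      simp only [Finset.sum_apply, Pi.smul_apply, smul_eq_mul]
      exact Finset.abs_sum_le_sum_abs _ _
    refine h1.trans (Finset.sum_le_sum fun j _ => ?_)
    rw [abs_mul]
    exact mul_le_mul ((hCb j s).trans (le_abs_self _)) (norm_le_pi_norm (G.B j) i)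
      (abs_nonneg _) (abs_nonneg _)
  have hfm2 : ∀ i, Measurable fun s => (∑ j : Fin n, u j (s - G.τ) • G.B j) i :=
    fun i => (hfm i).comp (measurable_id.sub measurable_const)
  have hfb2 : ∀ s i, |(∑ j : Fin n, u j (s - G.τ) • G.B j) i| ≤ ∑ j : Fin n, |C j| * ‖G.B j‖ :=
    fun s i => hfb _ i
  have hτT : G.τ + G.T = G.tf := by simp [GameData.T]
  have hII : ∀ a b : ℝ,
      IntervalIntegrable (fun s => (mexp ((G.T - s) • G.Λ)).mulVec
        (∑ j : Fin n, u j s • G.B j)) volume a b :=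
    fun a b => II_vec G.Λ G.T _ hfm _ hfb a b
  rw [hy G.T]
  simp only [GameData.xtraj]
  rw [Matrix.mulVec_add, Matrix.mulVec_add]
  have h1 : (mexp (G.τ • G.Λ)).mulVec ((mexp (G.T • G.Λ)).mulVec x0)
      = (mexp (G.tf • G.Λ)).mulVec x0 := by
    rw [Matrix.mulVec_mulVec, ← mexp_add_smul, hτT]
  have h2 : (mexp (G.τ • G.Λ)).mulVec
        (∫ s in (0:ℝ)..G.T, (mexp ((G.T - s) • G.Λ)).mulVec (∑ j : Fin n, u j (s - G.τ) • G.B j))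
      = ∫ s in (-G.τ)..(G.T - G.τ), (mexp ((G.T - s) • G.Λ)).mulVec
          (∑ j : Fin n, u j s • G.B j) := by
    rw [pull_mulVec _ _ _ _ (II_vec G.Λ G.T _ hfm2 _ hfb2 0 G.T)]
    have e1 : (fun s => (mexp (G.τ • G.Λ)).mulVec
          ((mexp ((G.T - s) • G.Λ)).mulVec (∑ j : Fin n, u j (s - G.τ) • G.B j)))
        = fun s => (fun x => (mexp ((G.T - x) • G.Λ)).mulVec
            (∑ j : Fin n, u j x • G.B j)) (s - G.τ) := by
      funext s
      show (mexp (G.τ • G.Λ)).mulVec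
          ((mexp ((G.T - s) • G.Λ)).mulVec (∑ j : Fin n, u j (s - G.τ) • G.B j))
        = (mexp ((G.T - (s - G.τ)) • G.Λ)).mulVec (∑ j : Fin n, u j (s - G.τ) • G.B j)
      rw [Matrix.mulVec_mulVec, ← mexp_add_smul,
        show G.τ + (G.T - s) = G.T - (s - G.τ) by ring]
    rw [e1, intervalIntegral.integral_comp_sub_right
      (fun x => (mexp ((G.T - x) • G.Λ)).mulVec (∑ j : Fin n, u j x • G.B j)) G.τ, zero_sub]
  have h3 : (mexp (G.τ • G.Λ)).mulVec
        (∫ s in (G.T - G.τ)..G.T, (mexp ((G.T - s - G.τ) • G.Λ)).mulVec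
          (∑ j : Fin n, u j s • G.B j))
      = ∫ s in (G.T - G.τ)..G.T, (mexp ((G.T - s) • G.Λ)).mulVec
          (∑ j : Fin n, u j s • G.B j) := by
    have e0 : (fun s => (mexp ((G.T - s - G.τ) • G.Λ)).mulVec (∑ j : Fin n, u j s • G.B j))
        = fun s => (mexp ((G.T - G.τ - s) • G.Λ)).mulVec (∑ j : Fin n, u j s • G.B j) := by
      funext s
      rw [sub_right_comm]
    rw [e0, pull_mulVec _ _ _ _ (II_vec G.Λ (G.T - G.τ) _ hfm _ hfb (G.T - G.τ) G.T)]
    congr 1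
    funext s
    rw [Matrix.mulVec_mulVec, ← mexp_add_smul,
      show G.τ + (G.T - G.τ - s) = G.T - s by ring]
  rw [h1, h2, h3, add_assoc,
    intervalIntegral.integral_add_adjacent_intervals (hII (-G.τ) (G.T - G.τ)) (hII (G.T - G.τ) G.T)]
  have h4 : (∫ s in (0:ℝ)..G.tf, (mexp ((G.tf - s) • G.Λ)).mulVec
        (∑ j : Fin n, u j (s - G.τ) • G.B j))
      = ∫ s in (-G.τ)..G.T, (mexp ((G.T - s) • G.Λ)).mulVec (∑ j : Fin n, u j s • G.B j) := by
    have e1 : (fun s => (mexp ((G.tf - s) • G.Λ)).mulVec (∑ j : Fin n, u j (s - G.τ) • G.B j))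
        = fun s => (fun x => (mexp ((G.T - x) • G.Λ)).mulVec
            (∑ j : Fin n, u j x • G.B j)) (s - G.τ) := by
      funext s
      show (mexp ((G.tf - s) • G.Λ)).mulVec (∑ j : Fin n, u j (s - G.τ) • G.B j)
        = (mexp ((G.T - (s - G.τ)) • G.Λ)).mulVec (∑ j : Fin n, u j (s - G.τ) • G.B j)
      rw [show G.T - (s - G.τ) = G.tf - s from by rw [← hτT]; ring]
    rw [e1, intervalIntegral.integral_comp_sub_right
      (fun x => (mexp ((G.T - x) • G.Λ)).mulVec (∑ j : Fin n, u j x • G.B j)) G.τ, zero_sub,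
      show G.tf - G.τ = G.T from rfl]
  rw [h4]

/-- The control-cost change of variables. -/
lemma cost_key {n : ℕ} (G : GameData n) (hτ : 0 ≤ G.τ) (u : Fin n → ℝ → ℝ)
    (hu : ∀ i, AdmissibleD (u i)) (i : Fin n) :
    (∫ t in (0:ℝ)..G.tf, G.r i * u i (t - G.τ) ^ 2) = ∫ t in (0:ℝ)..G.T, G.r i * u i t ^ 2 := by
  obtain ⟨hm, ⟨C, hC⟩, hz⟩ := hu i
  have hgm : Measurable fun t => G.r i * u i t ^ 2 := measurable_const.mul (hm.pow_const 2)
  have hgb : ∀ t, |G.r i * u i t ^ 2| ≤ |G.r i| * C ^ 2 := by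
    intro t
    rw [abs_mul]
    refine mul_le_mul_of_nonneg_left ?_ (abs_nonneg _)
    have : |u i t ^ 2| = |u i t| ^ 2 := by rw [abs_pow, sq_abs, ← sq_abs]
    rw [this]
    exact pow_le_pow_left₀ (abs_nonneg _) (hC t) 2
  have hii : ∀ a b : ℝ, IntervalIntegrable (fun t => G.r i * u i t ^ 2) volume a b :=
    fun a b => II_scalar _ hgm _ hgb a b
  rw [intervalIntegral.integral_comp_sub_right (fun t => G.r i * u i t ^ 2) G.τ, zero_sub,
    show G.tf - G.τ = G.T from rfl,
    ← intervalIntegral.integral_add_adjacent_intervals (hii (-G.τ) 0) (hii 0 G.T)]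
  have h0 : (∫ t in (-G.τ)..(0:ℝ), G.r i * u i t ^ 2) = 0 := by
    have hae : ∀ᵐ x : ℝ, x ∈ Set.uIoc (-G.τ) (0:ℝ) →
        G.r i * u i x ^ 2 = (fun _ => (0:ℝ)) x := by
      have h0' : ∀ᵐ x : ℝ, x ≠ 0 := by
        rw [MeasureTheory.ae_iff]; simpa using Real.volume_singleton
      filter_upwards [h0'] with x hx hmem
      have hxle : x ≤ 0 := by
        rcases Set.mem_uIoc.mp hmem with h | h
        · exact h.2
        · exact h.2.trans (neg_nonpos.mpr hτ)
      rw [hz x (lt_of_le_of_ne hxle hx)]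
      ring
    have := intervalIntegral.integral_congr_ae (μ := volume) (a := -G.τ) (b := (0:ℝ))
      (f := fun t => G.r i * u i t ^ 2) (g := fun _ => (0:ℝ)) hae
    simpa using this
  rw [h0, zero_add]

end S4Aux

/-- For an admissible control profile `u` of the delayed game with trajectory `x_u` from
`x₀` and delay-free transform `y`, the stubborn cost satisfies
`J̃ᵢ(u) = (exp(τΛ)·y(T) − x₀)ᵀ·Wᵢ·(exp(τΛ)·y(T) − x₀) + ((1−ωᵢ)/dᵢ)·y(T)ᵀ·L̂ᵢ·y(T) + ∫₀ᵀ rᵢ uᵢ²`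
`= y(T)ᵀ·Ŵᵢ·y(T) − 2·y(T)ᵀ·exp(τΛᵀ)·Wᵢ·x₀ + x₀ᵀ·Wᵢ·x₀ + ((1−ωᵢ)/dᵢ)·y(T)ᵀ·L̂ᵢ·y(T) + ∫₀ᵀ rᵢ uᵢ²`. -/
theorem statement_4 {n : ℕ} (G : GameData n) (hG : G.Valid) (x0 : Fin n → ℝ)
    (u : Fin n → ℝ → ℝ) (hu : ∀ i, AdmissibleD (u i)) (y : ℝ → Fin n → ℝ)
    (hy : ∀ t, y t = G.xtraj x0 u t +
      ∫ s in (t - G.τ)..t,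
        (mexp ((t - s - G.τ) • G.Λ)).mulVec (∑ j : Fin n, u j s • G.B j)) :
    ∀ i,
      G.Jstub x0 i u =
        ((mexp (G.τ • G.Λ)).mulVec (y G.T) - x0) ⬝ᵥ
            (G.W i).mulVec ((mexp (G.τ • G.Λ)).mulVec (y G.T) - x0) +
          ((1 - G.ω i) / G.d i) * (y G.T ⬝ᵥ (G.Lhat i).mulVec (y G.T)) +
          ∫ t in (0:ℝ)..G.T, G.r i * u i t ^ 2 ∧
      G.Jstub x0 i u =
        y G.T ⬝ᵥ (G.What i).mulVec (y G.T) -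
          2 * (y G.T ⬝ᵥ (mexp (G.τ • G.Λᵀ)).mulVec ((G.W i).mulVec x0)) +
          x0 ⬝ᵥ (G.W i).mulVec x0 +
          ((1 - G.ω i) / G.d i) * (y G.T ⬝ᵥ (G.Lhat i).mulVec (y G.T)) +
          ∫ t in (0:ℝ)..G.T, G.r i * u i t ^ 2 := by
  intro i
  obtain ⟨hτ, -⟩ := hG
  have hxE : G.xtraj x0 u G.tf = (mexp (G.τ • G.Λ)).mulVec (y G.T) :=
    (S4Aux.traj_key G x0 u hu y hy).symm
  have hcost := S4Aux.cost_key G hτ u hu i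
  have hL : G.xtraj x0 u G.tf ⬝ᵥ (G.L i).mulVec (G.xtraj x0 u G.tf)
      = y G.T ⬝ᵥ (G.Lhat i).mulVec (y G.T) := by
    rw [hxE, S4Aux.quad, GameData.Lhat, S4Aux.mexp_transpose]
  have hpart1 : G.Jstub x0 i u =
      ((mexp (G.τ • G.Λ)).mulVec (y G.T) - x0) ⬝ᵥ
          (G.W i).mulVec ((mexp (G.τ • G.Λ)).mulVec (y G.T) - x0) +
        ((1 - G.ω i) / G.d i) * (y G.T ⬝ᵥ (G.Lhat i).mulVec (y G.T)) +
        ∫ t in (0:ℝ)..G.T, G.r i * u i t ^ 2 := by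
    rw [GameData.Jstub, hL, hxE, hcost]
  refine ⟨hpart1, hpart1.trans ?_⟩
  have hWhat : y G.T ⬝ᵥ (G.What i).mulVec (y G.T)
      = ((mexp (G.τ • G.Λ)).mulVec (y G.T)) ⬝ᵥ
          (G.W i).mulVec ((mexp (G.τ • G.Λ)).mulVec (y G.T)) := by
    rw [GameData.What, S4Aux.mexp_transpose, ← S4Aux.quad]
  have hcross : y G.T ⬝ᵥ (mexp (G.τ • G.Λᵀ)).mulVec ((G.W i).mulVec x0)
      = ((mexp (G.τ • G.Λ)).mulVec (y G.T)) ⬝ᵥ (G.W i).mulVec x0 := by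
    rw [S4Aux.mexp_transpose, S4Aux.dot_trans]
  rw [hWhat, hcross]
  simp only [GameData.W, S4Aux.dot_W, Pi.sub_apply]
  ring
end
end

section
/- Suppose y : [0,T] → ℝⁿ satisfies the integral equation y(t) = exp(tΛ)·y_0 − ∑_{j=1}^n ( ∫₀ᵗ exp((t−s)Λ)·S_j·exp((T−s)Λᵀ) ds )·(1/d_j)·L̂_j·y(T) for all t ∈ [0,T]. Then H·y(T) = exp(TΛ)·y_0. Consequently, if H is invertible, then y(T) = H⁻¹·exp(TΛ)·y_0, and there is exactly one function y : [0,T] → ℝⁿ satisfying the integral equation. -/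
open Matrix MeasureTheory
open scoped Matrix

noncomputable section

/-- If `y : [0,T] → ℝⁿ` satisfies the integral equation
`y(t) = exp(tΛ)·y₀ − ∑ⱼ (∫₀ᵗ exp((t−s)Λ)·Sⱼ·exp((T−s)Λᵀ) ds)·(1/dⱼ)·L̂ⱼ·y(T)`, then
`H·y(T) = exp(TΛ)·y₀`; consequently if `H` is invertible then `y(T) = H⁻¹·exp(TΛ)·y₀`
and the solution of the integral equation is unique. -/
theorem statement_7 {n : ℕ} (G : GameData n) (hG : G.Valid) (y0 : Fin n → ℝ)
    (y : ℝ → Fin n → ℝ)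
    (hy : ∀ t ∈ Set.Icc (0:ℝ) G.T, y t =
      (mexp (t • G.Λ)).mulVec y0 -
        ∑ j : Fin n, (G.Phi G.T j t).mulVec ((1 / G.d j) • (G.Lhat j).mulVec (y G.T))) :
    G.H.mulVec (y G.T) = (mexp (G.T • G.Λ)).mulVec y0 ∧
      (IsUnit G.H →
        y G.T = G.H⁻¹.mulVec ((mexp (G.T • G.Λ)).mulVec y0) ∧
          ∀ z : ℝ → Fin n → ℝ,
            (∀ t ∈ Set.Icc (0:ℝ) G.T, z t =
              (mexp (t • G.Λ)).mulVec y0 -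
                ∑ j : Fin n, (G.Phi G.T j t).mulVec
                  ((1 / G.d j) • (G.Lhat j).mulVec (z G.T))) →
            ∀ t ∈ Set.Icc (0:ℝ) G.T, z t = y t) := by

  have hT : (0:ℝ) ≤ G.T := by
    have := hG.1; have := hG.2.1
    unfold GameData.T; linarith
  have key : ∀ w : ℝ → Fin n → ℝ,
      (∀ t ∈ Set.Icc (0:ℝ) G.T, w t =
        (mexp (t • G.Λ)).mulVec y0 -
          ∑ j : Fin n, (G.Phi G.T j t).mulVec ((1 / G.d j) • (G.Lhat j).mulVec (w G.T))) →
      G.H.mulVec (w G.T) = (mexp (G.T • G.Λ)).mulVec y0 := by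
    intro w hw
    have h1 := hw G.T ⟨hT, le_refl _⟩
    have hsum : (∑ j : Fin n, (1 / G.d j) • (G.Psi j * G.Lhat j)).mulVec (w G.T)
        = ∑ j : Fin n, (G.Phi G.T j G.T).mulVec ((1 / G.d j) • (G.Lhat j).mulVec (w G.T)) := by
      have hs : ∀ (M : Fin n → Matrix (Fin n) (Fin n) ℝ) (v : Fin n → ℝ),
          (∑ j, M j).mulVec v = ∑ j, (M j).mulVec v := by
        intro M v
        ext a
        simp only [Matrix.mulVec, dotProduct, Matrix.sum_apply, Finset.sum_apply,
          Finset.sum_mul]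
        rw [Finset.sum_comm]
      rw [hs]
      refine Finset.sum_congr rfl fun j _ => ?_
      rw [Matrix.mulVec_smul, Matrix.smul_mulVec, ← Matrix.mulVec_mulVec]
      rfl
    unfold GameData.H
    rw [Matrix.add_mulVec, Matrix.one_mulVec, hsum]
    exact eq_sub_iff_add_eq.mp h1
  have hHy := key y hy
  refine ⟨hHy, fun hU => ?_⟩
  have hyT : y G.T = G.H⁻¹.mulVec ((mexp (G.T • G.Λ)).mulVec y0) := by
    rw [← hHy, Matrix.mulVec_mulVec, Matrix.nonsing_inv_mul _ ((Matrix.isUnit_iff_isUnit_det _).mp hU), Matrix.one_mulVec]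
  refine ⟨hyT, fun z hz t ht => ?_⟩
  have hzT : z G.T = y G.T := by
    have hHz := key z hz
    rw [hyT, ← hHz, Matrix.mulVec_mulVec,
      Matrix.nonsing_inv_mul _ ((Matrix.isUnit_iff_isUnit_det _).mp hU), Matrix.one_mulVec]
  rw [hz t ht, hy t ht, hzT]
end
end

section
/- Let u* = (u*_1,…,u*_n) be an admissible control profile of the delay-free game with trajectory y* = y_{u*} from y_0 ∈ ℝⁿ. If for every player i and almost every t ∈ [0,T] one has u*_i(t) = −(1/(r_i·d_i))·B̂_iᵀ·exp((T−t)Λᵀ)·L̂_i·y*(T), then u* is an open-loop Nash equilibrium of the delay-free game. -/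
open Matrix MeasureTheory
open scoped Matrix

noncomputable section

section Aux

attribute [local instance] Matrix.linftyOpNormedRing Matrix.linftyOpNormedAlgebra

lemma continuous_mexp_aff {n : ℕ} (Λ : Matrix (Fin n) (Fin n) ℝ) (T : ℝ) :
    Continuous fun s : ℝ => mexp ((T - s) • Λ) := by
  unfold mexp
  exact (NormedSpace.exp_continuous (𝔸 := Matrix (Fin n) (Fin n) ℝ)).comp
    ((continuous_const.sub continuous_id).smul continuous_const)

lemma continuous_mexp_entry {n : ℕ} (Λ : Matrix (Fin n) (Fin n) ℝ) (T : ℝ) (a b : Fin n) :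
    Continuous fun s : ℝ => mexp ((T - s) • Λ) a b :=
  (continuous_apply b).comp ((continuous_apply a).comp (continuous_mexp_aff Λ T))

lemma continuous_mexp_mulVec {n : ℕ} (Λ : Matrix (Fin n) (Fin n) ℝ) (T : ℝ)
    (c : Fin n → ℝ) (k : Fin n) :
    Continuous fun s : ℝ => ((mexp ((T - s) • Λ)) *ᵥ c) k := by
  simp only [Matrix.mulVec, dotProduct]
  exact continuous_finset_sum _ fun b _ =>
    (continuous_mexp_entry Λ T k b).mul continuous_const

end Aux

lemma II_mul {f g : ℝ → ℝ} (hf : Measurable f) {C : ℝ} (hC : ∀ s, |f s| ≤ C)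
    (hg : Continuous g) (a b : ℝ) :
    IntervalIntegrable (fun s => f s * g s) volume a b := by
  rw [intervalIntegrable_iff]
  obtain ⟨D, hD⟩ := (isCompact_uIcc (a := a) (b := b)).exists_bound_of_continuousOn
    hg.continuousOn
  refine Integrable.mono' (g := fun _ => C * D)
    ((integrableOn_const_iff (C := C * D)).mpr (Or.inr ?_)) ((hf.mul hg.measurable).aestronglyMeasurable) ?_
  · rw [Set.uIoc]; exact measure_Ioc_lt_top
  · refine (ae_restrict_mem measurableSet_uIoc).mono fun x hx => ?_
    have h1 : ‖g x‖ ≤ D := hD x (Set.uIoc_subset_uIcc hx)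
    have h0 : 0 ≤ C := le_trans (abs_nonneg _) (hC x)
    calc ‖f x * g x‖ = |f x| * ‖g x‖ := by rw [Real.norm_eq_abs, abs_mul, Real.norm_eq_abs]
    _ ≤ C * D := mul_le_mul (hC x) h1 (norm_nonneg _) h0

lemma II_bdd {f : ℝ → ℝ} (hf : Measurable f) {C : ℝ} (hC : ∀ s, |f s| ≤ C) (a b : ℝ) :
    IntervalIntegrable f volume a b := by
  have := II_mul hf hC continuous_const (a := a) (b := b) (g := fun _ => (1:ℝ))
  simpa using this

lemma II_sum {ι : Type*} (s : Finset ι) {f : ι → ℝ → ℝ} {a b : ℝ}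
    (h : ∀ j ∈ s, IntervalIntegrable (f j) volume a b) :
    IntervalIntegrable (fun t => ∑ j ∈ s, f j t) volume a b := by
  rw [intervalIntegrable_iff]
  exact integrable_finset_sum s fun j hj => intervalIntegrable_iff.mp (h j hj)

lemma pi_integral_apply {n : ℕ} {F : ℝ → Fin n → ℝ} {a b : ℝ}
    (h : ∀ k, IntervalIntegrable (fun s => F s k) volume a b) (k : Fin n) :
    (∫ s in a..b, F s) k = ∫ s in a..b, F s k := by
  have hrep : ∀ s, F s = ∑ j : Fin n, F s j • (Pi.single j 1 : Fin n → ℝ) := by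
    intro s; funext m
    simp [Pi.single_apply]
  have h2 : (∫ s in a..b, F s) = ∑ j : Fin n, (∫ s in a..b, F s j) • (Pi.single j 1 : Fin n → ℝ) := by
    calc (∫ s in a..b, F s) = ∫ s in a..b, ∑ j : Fin n, F s j • (Pi.single j 1 : Fin n → ℝ) := by
          simp_rw [← hrep]
      _ = ∑ j : Fin n, ∫ s in a..b, F s j • (Pi.single j 1 : Fin n → ℝ) := by
          refine intervalIntegral.integral_finset_sum fun j _ => ?_
          rw [intervalIntegrable_iff]
          exact (intervalIntegrable_iff.mp (h j)).smul_const _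
      _ = ∑ j : Fin n, (∫ s in a..b, F s j) • (Pi.single j 1 : Fin n → ℝ) := by
          simp_rw [intervalIntegral.integral_smul_const]
  rw [h2]
  simp [Pi.single_apply]

/-- Sufficiency of the Pontryagin condition: if an admissible profile `u` of the delay-free
game with trajectory `y* = y_u` from `y₀` satisfies, for every player `i` and almost every
`t ∈ [0,T]`, `uᵢ(t) = −(1/(rᵢdᵢ))·B̂ᵢᵀ·exp((T−t)Λᵀ)·L̂ᵢ·y*(T)`, then `u` is an open-loop
Nash equilibrium of the delay-free game. -/
theorem statement_8 {n : ℕ} (G : GameData n) (hG : G.Valid) (y0 : Fin n → ℝ)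
    (u : Fin n → ℝ → ℝ) (hu : ∀ i, AdmissibleF (u i))
    (hopt : ∀ i, ∀ᵐ t ∂(volume.restrict (Set.Icc (0:ℝ) G.T)),
      u i t = -(1 / (G.r i * G.d i)) *
        (G.Bhat i ⬝ᵥ (mexp ((G.T - t) • G.Λᵀ)).mulVec
          ((G.Lhat i).mulVec (G.ytraj y0 u G.T)))) :
    G.NashF y0 u := by
  obtain ⟨hτ, hτtf, hr, hd, hL, hω⟩ := hG
  have hT : (0:ℝ) ≤ G.T := sub_nonneg.mpr hτtf.le
  refine ⟨hu, ?_⟩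
  intro i v hv
  obtain ⟨hvm, Cv, hCv⟩ := hv
  obtain ⟨hum, Cu, hCu⟩ := hu i
  set w : Fin n → ℝ → ℝ := Function.update u i v with hw
  -- transpose of matrix exponentials
  have hMT : ∀ c : ℝ, mexp (c • G.Λᵀ) = (mexp (c • G.Λ))ᵀ := by
    intro c
    rw [← Matrix.transpose_smul]
    exact Matrix.exp_transpose _
  set yT : Fin n → ℝ := G.ytraj y0 u G.T with hyT
  set zT : Fin n → ℝ := G.ytraj y0 w G.T with hzT
  set L : Matrix (Fin n) (Fin n) ℝ := G.Lhat i with hLdef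
  have hconj : (mexp (G.τ • G.Λ))ᴴ = (mexp (G.τ • G.Λ))ᵀ := by
    ext a b; simp [Matrix.conjTranspose_apply]
  have hLps : L.PosSemidef := by
    have h1 : L = (mexp (G.τ • G.Λ))ᴴ * G.L i * (mexp (G.τ • G.Λ)) := by
      rw [hLdef]
      show mexp (G.τ • G.Λᵀ) * G.L i * mexp (G.τ • G.Λ) = _
      rw [hMT, hconj]
    rw [h1]
    exact (hL i).conjTranspose_mul_mul_same _
  have hLsym : Lᵀ = L := by
    have h2 := hLps.1
    ext a b
    rw [Matrix.transpose_apply]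
    conv_lhs => rw [← h2]
    simp [Matrix.conjTranspose_apply]
  set p : Fin n → ℝ := L *ᵥ yT with hp
  set g : ℝ → ℝ := fun s => p ⬝ᵥ ((mexp ((G.T - s) • G.Λ)) *ᵥ G.Bhat i) with hg
  have hgc : Continuous g := by
    rw [hg]
    simp only [dotProduct]
    exact continuous_finset_sum _ fun k _ =>
      continuous_const.mul (continuous_mexp_mulVec G.Λ G.T (G.Bhat i) k)
  -- measurability / boundedness of v - u i
  have hvum : Measurable fun s => v s - u i s := hvm.sub hum
  have hvub : ∀ s, |v s - u i s| ≤ Cv + Cu := fun s =>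
    (abs_sub _ _).trans (add_le_add (hCv s) (hCu s))
  -- trajectory components
  have hwm : ∀ j, Measurable (w j) := by
    intro j; by_cases hj : j = i
    · subst hj; simpa [hw] using hvm
    · simpa [hw, Function.update_of_ne hj] using (hu j).1
  have hwb : ∀ j, ∃ C, ∀ s, |w j s| ≤ C := by
    intro j; by_cases hj : j = i
    · subst hj; exact ⟨Cv, by simpa [hw] using hCv⟩
    · obtain ⟨C, hC⟩ := (hu j).2
      exact ⟨C, by simpa [hw, Function.update_of_ne hj] using hC⟩
  have hlin : ∀ (ω : Fin n → ℝ → ℝ) (s : ℝ) (k : Fin n),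
      ((mexp ((G.T - s) • G.Λ)) *ᵥ (∑ j : Fin n, ω j s • G.Bhat j)) k
        = ∑ j : Fin n, ω j s * ((mexp ((G.T - s) • G.Λ)) *ᵥ G.Bhat j) k := by
    intro ω s k
    have : (mexp ((G.T - s) • G.Λ)) *ᵥ (∑ j : Fin n, ω j s • G.Bhat j)
        = ∑ j : Fin n, ω j s • ((mexp ((G.T - s) • G.Λ)) *ᵥ G.Bhat j) := by
      simp [Matrix.mulVec_sum, Matrix.mulVec_smul]
    rw [this]
    simp
  have hIcomp : ∀ (ω : Fin n → ℝ → ℝ), (∀ j, Measurable (ω j)) →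
      (∀ j, ∃ C, ∀ s, |ω j s| ≤ C) → ∀ k,
      IntervalIntegrable
        (fun s => ((mexp ((G.T - s) • G.Λ)) *ᵥ (∑ j : Fin n, ω j s • G.Bhat j)) k)
        volume 0 G.T := by
    intro ω hm hb k
    have : (fun s => ((mexp ((G.T - s) • G.Λ)) *ᵥ (∑ j : Fin n, ω j s • G.Bhat j)) k)
        = fun s => ∑ j : Fin n, ω j s * ((mexp ((G.T - s) • G.Λ)) *ᵥ G.Bhat j) k := by
      funext s; exact hlin ω s k
    rw [this]
    refine II_sum _ fun j _ => ?_
    obtain ⟨C, hC⟩ := hb j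
    exact II_mul (hm j) hC (continuous_mexp_mulVec G.Λ G.T (G.Bhat j) k) 0 G.T
  have htraj : ∀ (ω : Fin n → ℝ → ℝ), (∀ j, Measurable (ω j)) →
      (∀ j, ∃ C, ∀ s, |ω j s| ≤ C) → ∀ k,
      G.ytraj y0 ω G.T k = (mexp (G.T • G.Λ)).mulVec y0 k +
        ∫ s in (0:ℝ)..G.T, ∑ j : Fin n, ω j s * ((mexp ((G.T - s) • G.Λ)) *ᵥ G.Bhat j) k := by
    intro ω hm hb k
    show ((mexp (G.T • G.Λ)).mulVec y0 +
        ∫ s in (0:ℝ)..G.T, (mexp ((G.T - s) • G.Λ)).mulVec (∑ j : Fin n, ω j s • G.Bhat j)) k = _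
    rw [Pi.add_apply]
    congr 1
    rw [pi_integral_apply (hIcomp ω hm hb) k]
    exact intervalIntegral.integral_congr fun s _ => hlin ω s k
  -- the deviation vector
  set δ : Fin n → ℝ := fun k =>
    ∫ s in (0:ℝ)..G.T, (v s - u i s) * ((mexp ((G.T - s) • G.Λ)) *ᵥ G.Bhat i) k with hδ
  have hIδ : ∀ k, IntervalIntegrable
      (fun s => (v s - u i s) * ((mexp ((G.T - s) • G.Λ)) *ᵥ G.Bhat i) k) volume 0 G.T :=
    fun k => II_mul hvum hvub (continuous_mexp_mulVec G.Λ G.T (G.Bhat i) k) 0 G.T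
  have hz : zT = yT + δ := by
    funext k
    rw [hzT, hyT, Pi.add_apply, htraj w hwm hwb k,
      htraj u (fun j => (hu j).1) (fun j => (hu j).2) k, hδ]
    rw [add_assoc]
    congr 1
    have hsum : ∀ s : ℝ,
        (∑ j : Fin n, w j s * ((mexp ((G.T - s) • G.Λ)) *ᵥ G.Bhat j) k)
          = (∑ j : Fin n, u j s * ((mexp ((G.T - s) • G.Λ)) *ᵥ G.Bhat j) k)
            + (v s - u i s) * ((mexp ((G.T - s) • G.Λ)) *ᵥ G.Bhat i) k := by
      intro s
      have h1 : (fun j => w j s * ((mexp ((G.T - s) • G.Λ)) *ᵥ G.Bhat j) k)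
          = Function.update (fun j => u j s * ((mexp ((G.T - s) • G.Λ)) *ᵥ G.Bhat j) k) i
              (v s * ((mexp ((G.T - s) • G.Λ)) *ᵥ G.Bhat i) k) := by
        funext j
        by_cases hj : j = i
        · subst hj; simp [hw]
        · simp [hw, Function.update_of_ne hj]
      rw [h1, Finset.sum_update_of_mem (Finset.mem_univ i)]
      rw [Finset.sum_eq_sum_sdiff_singleton_add (Finset.mem_univ i)
        (fun j => u j s * ((mexp ((G.T - s) • G.Λ)) *ᵥ G.Bhat j) k)]
      ring
    have hIu : IntervalIntegrable
        (fun s => ∑ j : Fin n, u j s * ((mexp ((G.T - s) • G.Λ)) *ᵥ G.Bhat j) k) volume 0 G.T := by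
      refine II_sum _ fun j _ => ?_
      obtain ⟨C, hC⟩ := (hu j).2
      exact II_mul (hu j).1 hC (continuous_mexp_mulVec G.Λ G.T (G.Bhat j) k) 0 G.T
    calc (∫ s in (0:ℝ)..G.T, ∑ j : Fin n, w j s * ((mexp ((G.T - s) • G.Λ)) *ᵥ G.Bhat j) k)
        = ∫ s in (0:ℝ)..G.T,
            ((∑ j : Fin n, u j s * ((mexp ((G.T - s) • G.Λ)) *ᵥ G.Bhat j) k)
              + (v s - u i s) * ((mexp ((G.T - s) • G.Λ)) *ᵥ G.Bhat i) k) :=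
          intervalIntegral.integral_congr fun s _ => hsum s
      _ = _ := intervalIntegral.integral_add hIu (hIδ k)
  -- P
  set P : ℝ := ∫ s in (0:ℝ)..G.T, (v s - u i s) * g s with hP
  have hIP : IntervalIntegrable (fun s => (v s - u i s) * g s) volume 0 G.T :=
    II_mul hvum hvub hgc 0 G.T
  have hpδ : p ⬝ᵥ δ = P := by
    rw [dotProduct, hP]
    calc (∑ k : Fin n, p k * δ k)
        = ∑ k : Fin n, ∫ s in (0:ℝ)..G.T,
            p k * ((v s - u i s) * ((mexp ((G.T - s) • G.Λ)) *ᵥ G.Bhat i) k) := by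
          refine Finset.sum_congr rfl fun k _ => ?_
          rw [hδ, intervalIntegral.integral_const_mul]
      _ = ∫ s in (0:ℝ)..G.T, ∑ k : Fin n,
            p k * ((v s - u i s) * ((mexp ((G.T - s) • G.Λ)) *ᵥ G.Bhat i) k) :=
          (intervalIntegral.integral_finset_sum fun k _ => (hIδ k).const_mul _).symm
      _ = ∫ s in (0:ℝ)..G.T, (v s - u i s) * g s := by
          refine intervalIntegral.integral_congr fun s _ => ?_
          simp only [hg]
          simp only [dotProduct, Finset.mul_sum]
          exact Finset.sum_congr rfl fun k _ => by ring
  -- quadratic expansion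
  have hquad : zT ⬝ᵥ L *ᵥ zT = yT ⬝ᵥ L *ᵥ yT + 2 * P + δ ⬝ᵥ L *ᵥ δ := by
    rw [hz, Matrix.mulVec_add, add_dotProduct, dotProduct_add,
      dotProduct_add]
    have h2 : yT ⬝ᵥ L *ᵥ δ = p ⬝ᵥ δ := by
      rw [Matrix.dotProduct_mulVec, ← Matrix.mulVec_transpose, hLsym, ← hp]
    have h3 : δ ⬝ᵥ L *ᵥ yT = p ⬝ᵥ δ := by
      rw [← hp, dotProduct_comm]
    rw [h2, h3, hpδ]
    ring
  have hδLδ : 0 ≤ δ ⬝ᵥ L *ᵥ δ := by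
    have := hLps.dotProduct_mulVec_nonneg δ
    simpa using this
  -- optimality rewritten via g
  have hgopt : ∀ᵐ t ∂(volume.restrict (Set.Icc (0:ℝ) G.T)),
      u i t = -(1 / (G.r i * G.d i)) * g t := by
    filter_upwards [hopt i] with t ht
    rw [ht]
    congr 1
    simp only [hg]
    rw [hMT, Matrix.mulVec_transpose, ← hp]
    rw [Matrix.dotProduct_mulVec p, dotProduct_comm]
  -- control cost comparison
  have hae : ∀ᵐ t ∂(volume : Measure ℝ), t ∈ Set.Icc (0:ℝ) G.T →
      u i t = -(1 / (G.r i * G.d i)) * g t :=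
    (ae_restrict_iff' measurableSet_Icc).mp hgopt
  have hIntv2 : IntervalIntegrable (fun t => G.r i * v t ^ 2) volume 0 G.T := by
    refine II_bdd (measurable_const.mul (hvm.pow measurable_const))
      (C := |G.r i| * Cv ^ 2) (fun s => ?_) 0 G.T
    simp only [Pi.mul_apply, abs_mul]
    refine mul_le_mul_of_nonneg_left ?_ (abs_nonneg _)
    rw [abs_pow]
    exact pow_le_pow_left₀ (abs_nonneg _) (hCv s) 2
  have hIntu2 : IntervalIntegrable (fun t => G.r i * u i t ^ 2) volume 0 G.T := by
    refine II_bdd (measurable_const.mul (hum.pow measurable_const))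
      (C := |G.r i| * Cu ^ 2) (fun s => ?_) 0 G.T
    simp only [Pi.mul_apply, abs_mul]
    refine mul_le_mul_of_nonneg_left ?_ (abs_nonneg _)
    rw [abs_pow]
    exact pow_le_pow_left₀ (abs_nonneg _) (hCu s) 2
  have hIntsq : IntervalIntegrable (fun t => G.r i * (v t - u i t) ^ 2) volume 0 G.T := by
    refine II_bdd (measurable_const.mul (hvum.pow measurable_const))
      (C := |G.r i| * (Cv + Cu) ^ 2) (fun s => ?_) 0 G.T
    simp only [Pi.mul_apply, abs_mul]
    refine mul_le_mul_of_nonneg_left ?_ (abs_nonneg _)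
    rw [abs_pow]
    exact pow_le_pow_left₀ (abs_nonneg _) (hvub s) 2
  have hctrl : (∫ t in (0:ℝ)..G.T, G.r i * v t ^ 2) - (∫ t in (0:ℝ)..G.T, G.r i * u i t ^ 2)
      ≥ -(2 / G.d i) * P := by
    have hdiff : (∫ t in (0:ℝ)..G.T, G.r i * v t ^ 2) - (∫ t in (0:ℝ)..G.T, G.r i * u i t ^ 2)
        = ∫ t in (0:ℝ)..G.T, (G.r i * v t ^ 2 - G.r i * u i t ^ 2) :=
      (intervalIntegral.integral_sub hIntv2 hIntu2).symm
    have hcongr : (∫ t in (0:ℝ)..G.T, (G.r i * v t ^ 2 - G.r i * u i t ^ 2))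
        = ∫ t in (0:ℝ)..G.T,
            (G.r i * (v t - u i t) ^ 2 + (-(2 / G.d i)) * ((v t - u i t) * g t)) := by
      refine intervalIntegral.integral_congr_ae ?_
      filter_upwards [hae] with t ht hmem
      have hmem' : t ∈ Set.Icc (0:ℝ) G.T :=
        Set.Ioc_subset_Icc_self (by rwa [Set.uIoc_of_le hT] at hmem)
      have hut := ht hmem'
      rw [hut]
      have hrne : G.r i ≠ 0 := (hr i).ne'
      have hdne : G.d i ≠ 0 := (hd i).ne'
      field_simp
      ring
    rw [hdiff, hcongr,
      intervalIntegral.integral_add hIntsq (hIP.const_mul _),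
      intervalIntegral.integral_const_mul (-(2 / G.d i)) (fun t => (v t - u i t) * g t)]
    have hnn : 0 ≤ ∫ t in (0:ℝ)..G.T, G.r i * (v t - u i t) ^ 2 := by
      refine intervalIntegral.integral_nonneg hT fun t _ => ?_
      exact mul_nonneg (hr i).le (sq_nonneg _)
    rw [← hP]
    linarith
  -- assemble
  have hJu : G.JF y0 i u = (1 / G.d i) * (yT ⬝ᵥ L *ᵥ yT)
      + ∫ t in (0:ℝ)..G.T, G.r i * u i t ^ 2 := rfl
  have hJw : G.JF y0 i w = (1 / G.d i) * (zT ⬝ᵥ L *ᵥ zT)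
      + ∫ t in (0:ℝ)..G.T, G.r i * v t ^ 2 := by
    show (1 / G.d i) * (zT ⬝ᵥ L *ᵥ zT) + (∫ t in (0:ℝ)..G.T, G.r i * w i t ^ 2) = _
    congr 1
    refine intervalIntegral.integral_congr fun t _ => ?_
    simp [hw]
  rw [hJu, hJw, hquad]
  have hd0 : (0:ℝ) < G.d i := hd i
  have hQ : 0 ≤ (1 / G.d i) * (δ ⬝ᵥ L *ᵥ δ) := by
    exact mul_nonneg (by positivity) hδLδ
  have hexp : (1 / G.d i) * (yT ⬝ᵥ L *ᵥ yT + 2 * P + δ ⬝ᵥ L *ᵥ δ)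
      = (1 / G.d i) * (yT ⬝ᵥ L *ᵥ yT) + (2 / G.d i) * P + (1 / G.d i) * (δ ⬝ᵥ L *ᵥ δ) := by
    ring
  have h2P : -(2 / G.d i) * P = -((2 / G.d i) * P) := by ring
  rw [hexp]
  rw [h2P] at hctrl
  linarith
end
end
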